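/- For all real α, β ≠ 0, γ₁, γ₂, x, all λ₁, λ₂ ∈ ℕ with λ₁, λ₂ ≥ 1, and all n ≥ 0: Σ_{k=0}^{n} C(n,k) · A^{λ₁,x}_k(α,β,α+β+γ₁) · A^{λ₂,x}_{n-k}(α,β,γ₂) = A^{λ₁+λ₂,x}_n(α,β,α+β+γ₁+γ₂). -/

import Mathlib

open Finset

/-- Generalized factorial polynomial `(t|α)_n = ∏_{j=0}^{n-1} (t - jα)`. -/
noncomputable def gfact (t α : ℝ) (n : ℕ) : ℝ := ∏ j ∈ Finset.range n, (t - j * α)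

/-- Hsu–Shiue generalized Stirling numbers (explicit formula, β ≠ 0). -/
noncomputable def HS (n k : ℕ) (α β γ : ℝ) : ℝ :=
  (1 / (β ^ k * (Nat.factorial k : ℝ))) *
    ∑ s ∈ Finset.range (k + 1), (-1 : ℝ) ^ (k - s) * (Nat.choose k s : ℝ) * gfact (β * s + γ) α n

/-- Second-type higher order generalized geometric polynomials. -/
noncomputable def A (lam : ℕ) (x : ℝ) (n : ℕ) (α β γ : ℝ) : ℝ :=
  ∑ k ∈ Finset.range (n + 1),
    (Nat.choose (k + lam - 1) k : ℝ) * (-1 : ℝ) ^ (n + k) * β ^ k * (Nat.factorial k : ℝ) *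
      HS n k α (-β) (-γ) * x ^ k

lemma neg_one_pow_sub_real {s k : ℕ} (h : s ≤ k) : (-1 : ℝ)^(k-s) = (-1)^k * (-1)^s := by
  have h1 : (-1:ℝ)^(k-s) * (-1)^s = (-1)^k := by
    rw [← pow_add, Nat.sub_add_cancel h]
  have h2 : ((-1:ℝ)^s) * ((-1:ℝ)^s) = 1 := by
    rw [← pow_add]; exact Even.neg_one_pow ⟨s, rfl⟩
  calc (-1:ℝ)^(k-s) = (-1:ℝ)^(k-s) * (((-1:ℝ)^s) * ((-1:ℝ)^s)) := by rw [h2, mul_one]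
    _ = ((-1:ℝ)^(k-s) * (-1)^s) * (-1)^s := by ring
    _ = (-1)^k * (-1)^s := by rw [h1]

lemma gfact_succ (t δ : ℝ) (n : ℕ) : gfact t δ (n+1) = gfact t δ n * (t - n*δ) := by
  simp [gfact, prod_range_succ]

lemma gfact_neg (t δ : ℝ) (n : ℕ) : gfact (-t) δ n = (-1)^n * gfact t (-δ) n := by
  unfold gfact
  calc ∏ j ∈ range n, (-t - j*δ) = ∏ j ∈ range n, ((-1) * (t - j*(-δ))) := by
        apply prod_congr rfl; intro j _; ring
    _ = (∏ _j ∈ range n, (-1:ℝ)) * ∏ j ∈ range n, (t - j*(-δ)) := by rw [prod_mul_distrib]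
    _ = (-1)^n * ∏ j ∈ range n, (t - j*(-δ)) := by rw [prod_const, card_range]

/-- alternating sum of binomials times a degree-m "gfact polynomial" vanishes for m < k -/
lemma alt_sum_gfact_vanish (β δ : ℝ) :
    ∀ (m k : ℕ) (γ : ℝ), m < k →
      ∑ s ∈ range (k+1), (-1:ℝ)^(k-s) * (k.choose s) * gfact (β*s+γ) δ m = 0 := by
  intro m
  induction m with
  | zero =>
    intro k γ hk
    simp only [gfact, prod_range_zero, mul_one]
    have h1 : ∑ s ∈ range (k+1), (-1:ℝ)^(k-s) * (k.choose s)
        = (-1:ℝ)^k * ∑ s ∈ range (k+1), (-1:ℝ)^s * (k.choose s) := by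
      rw [mul_sum]; apply sum_congr rfl; intro s hs
      rw [neg_one_pow_sub_real (Nat.lt_succ_iff.mp (mem_range.mp hs))]; ring
    have h2 : ∑ s ∈ range (k+1), (-1:ℝ)^s * (k.choose s)
        = ((∑ s ∈ range (k+1), (-1:ℤ)^s * (k.choose s) : ℤ) : ℝ) := by
      push_cast; rfl
    rw [h1, h2, Int.alternating_sum_range_choose, if_neg (by omega)]
    simp
  | succ m ih =>
    intro k γ hk
    obtain ⟨k', rfl⟩ : ∃ k', k = k'+1 := ⟨k-1, by omega⟩
    have hsplit : ∑ s ∈ range (k'+1+1), (-1:ℝ)^(k'+1-s) * ((k'+1).choose s) * gfact (β*s+γ) δ (m+1)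
        = β * (∑ s ∈ range (k'+1+1), (-1:ℝ)^(k'+1-s) * ((k'+1).choose s) * ((s:ℝ) * gfact (β*s+γ) δ m))
          + (γ - m*δ) * (∑ s ∈ range (k'+1+1), (-1:ℝ)^(k'+1-s) * ((k'+1).choose s) * gfact (β*s+γ) δ m) := by
      rw [mul_sum, mul_sum, ← sum_add_distrib]
      apply sum_congr rfl; intro s _
      rw [gfact_succ]; ring
    rw [hsplit, ih (k'+1) γ (by omega), mul_zero, add_zero]
    rw [sum_range_succ']
    have hlast : (-1:ℝ)^(k'+1-0) * ((k'+1).choose 0) * (((0:ℕ):ℝ) * gfact (β*(0:ℕ)+γ) δ m) = 0 := by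
      simp
    rw [hlast, add_zero]
    have hterm : ∀ t ∈ range (k'+1),
        (-1:ℝ)^(k'+1-(t+1)) * ((k'+1).choose (t+1)) * (((t+1:ℕ):ℝ) * gfact (β*(t+1:ℕ)+γ) δ m)
        = ((k':ℝ)+1) * ((-1:ℝ)^(k'-t) * (k'.choose t) * gfact (β*t+(β+γ)) δ m) := by
      intro t _
      have hc : ((k'+1 : ℕ):ℝ) * (k'.choose t) = (((k'+1).choose (t+1) : ℕ) : ℝ) * ((t+1:ℕ):ℝ) := by
        exact_mod_cast congrArg (Nat.cast : ℕ → ℝ) (Nat.add_one_mul_choose_eq k' t)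
      have harg : β*((t+1:ℕ):ℝ)+γ = β*(t:ℝ)+(β+γ) := by push_cast; ring
      have hsub : k'+1-(t+1) = k'-t := by omega
      rw [harg, hsub]
      push_cast at hc ⊢
      linear_combination (-((-1:ℝ)^(k'-t) * gfact (β*(t:ℝ)+(β+γ)) δ m)) * hc
    rw [sum_congr rfl hterm, ← mul_sum, ih k' (β+γ) (by omega), mul_zero, mul_zero]

/-- Vandermonde for generalized factorials -/
lemma gfact_add_eq (δ : ℝ) (u v : ℝ) (n : ℕ) :
    gfact (u+v) δ n = ∑ k ∈ range (n+1), (n.choose k : ℝ) * gfact u δ k * gfact v δ (n-k) := by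
  induction n with
  | zero => simp [gfact]
  | succ n ih =>
    rw [gfact_succ, ih]
    rw [sum_range_succ' (fun k => ((n+1).choose k : ℝ) * gfact u δ k * gfact v δ (n+1-k)) (n+1)]
    have hsplit : ∀ t ∈ range (n+1),
        (((n+1).choose (t+1) : ℕ) : ℝ) * gfact u δ (t+1) * gfact v δ (n+1-(t+1))
        = (n.choose t : ℝ) * gfact u δ (t+1) * gfact v δ (n-t)
          + (n.choose (t+1) : ℝ) * gfact u δ (t+1) * gfact v δ (n+1-(t+1)) := by
      intro t _
      have : (n+1).choose (t+1) = n.choose t + n.choose (t+1) := Nat.choose_succ_succ n t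
      rw [this, Nat.succ_sub_succ]
      push_cast; ring
    rw [sum_congr rfl hsplit, sum_add_distrib]
    -- second piece plus the 0-term reassembles Σ_{k∈range(n+2)} C(n,k) g_u k g_v (n+1-k)
    have hre : (∑ t ∈ range (n+1), (n.choose (t+1) : ℝ) * gfact u δ (t+1) * gfact v δ (n+1-(t+1)))
          + (((n+1).choose 0 : ℕ) : ℝ) * gfact u δ 0 * gfact v δ (n+1-0)
        = ∑ k ∈ range (n+1+1), (n.choose k : ℝ) * gfact u δ k * gfact v δ (n+1-k) := by
      rw [sum_range_succ' (fun k => (n.choose k : ℝ) * gfact u δ k * gfact v δ (n+1-k)) (n+1)]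
      simp
    rw [add_assoc, hre]
    have hdrop : ∑ k ∈ range (n+1+1), (n.choose k : ℝ) * gfact u δ k * gfact v δ (n+1-k)
        = ∑ k ∈ range (n+1), (n.choose k : ℝ) * gfact u δ k * gfact v δ (n+1-k) := by
      rw [sum_range_succ]
      simp [Nat.choose_succ_self]
    rw [hdrop]
    rw [← sum_add_distrib, Finset.sum_mul]
    apply sum_congr rfl
    intro k hk
    have hkn : k ≤ n := Nat.lt_succ_iff.mp (mem_range.mp hk)
    have h1 : n + 1 - k = (n-k) + 1 := by omega
    rw [h1, gfact_succ, gfact_succ]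
    have h2 : ((n-k : ℕ) : ℝ) = (n : ℝ) - (k : ℝ) := by
      rw [Nat.cast_sub hkn]
    rw [h2]
    ring


lemma hstick (b : ℕ) : ∀ j, ∑ i ∈ range (j+1), ((i+b).choose b) = (j+b+1).choose (b+1) := by
  intro j
  induction j with
  | zero => simp
  | succ j ih =>
    rw [sum_range_succ, ih, show j+1+b = j+b+1 from by omega,
      show (j+b+1+1).choose (b+1) = (j+b+1).choose b + (j+b+1).choose (b+1) from Nat.choose_succ_succ _ _]
    omega

lemma triangle {M : Type*} [AddCommMonoid M] (f : ℕ → ℕ → M) (n : ℕ) :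
    ∑ K ∈ range (n+1), ∑ i ∈ range (K+1), f i (K-i)
      = ∑ i ∈ range (n+1), ∑ j ∈ range (n-i+1), f i j := by
  rw [sum_sigma', sum_sigma']
  apply sum_nbij' (fun p => (⟨p.2, p.1 - p.2⟩ : (_ : ℕ) × ℕ))
    (fun p => (⟨p.1 + p.2, p.1⟩ : (_ : ℕ) × ℕ))
  · rintro ⟨K, i⟩ hp
    simp only [mem_sigma, mem_range] at hp ⊢
    omega
  · rintro ⟨i, j⟩ hp
    simp only [mem_sigma, mem_range] at hp ⊢
    omega
  · rintro ⟨K, i⟩ hp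
    simp only [mem_sigma, mem_range] at hp
    have h : i + (K - i) = K := by omega
    simp [h]
  · rintro ⟨i, j⟩ hp
    simp
  · rintro ⟨K, i⟩ hp
    rfl

lemma nbvand (a : ℕ) : ∀ (b k : ℕ), ∑ i ∈ range (k+1), (i+a).choose a * ((k-i)+b).choose b
    = (k+a+b+1).choose (a+b+1) := by
  intro b
  induction b with
  | zero =>
    intro k
    simp only [Nat.add_zero, Nat.choose_zero_right, mul_one]
    rw [hstick a k]
  | succ b ih =>
    intro k
    have hterm : ∀ i ∈ range (k+1), (i+a).choose a * ((k-i)+(b+1)).choose (b+1)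
        = ∑ t ∈ range ((k-i)+1), (i+a).choose a * ((t+b).choose b) := by
      intro i _
      rw [show (k-i)+(b+1) = (k-i)+b+1 from by omega, ← hstick b (k-i), mul_sum]
    rw [sum_congr rfl hterm, ← triangle (fun i t => (i+a).choose a * ((t+b).choose b)) k]
    have hin : ∀ K ∈ range (k+1),
        ∑ i ∈ range (K+1), (i+a).choose a * ((K-i)+b).choose b = (K+(a+b+1)).choose (a+b+1) := by
      intro K _
      rw [ih K]
      congr 1
      omega
    rw [sum_congr rfl hin, hstick (a+b+1) k]
    congr 1 <;> omega

lemma vand_range (k₁ k₂ s : ℕ) :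
    ∑ i ∈ range (s+1), k₁.choose i * k₂.choose (s-i) = (k₁+k₂).choose s := by
  rw [Nat.add_choose_eq, Finset.Nat.sum_antidiagonal_eq_sum_range_succ_mk]

noncomputable def Tn (α β : ℝ) (n k : ℕ) (γ : ℝ) : ℝ :=
  ∑ s ∈ range (k+1), (-1:ℝ)^(k-s) * (k.choose s : ℝ) * gfact (β*s+γ) (-α) n

lemma Tn_vanish (α β : ℝ) {n k : ℕ} (γ : ℝ) (h : n < k) : Tn α β n k γ = 0 :=
  alt_sum_gfact_vanish β (-α) n k γ h

lemma A_repr (α β x γ : ℝ) (hβ : β ≠ 0) (lam n : ℕ) :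
    A lam x n α β γ = ∑ k ∈ range (n+1), x^k * ((k+lam-1).choose k : ℝ) * Tn α β n k γ := by
  unfold A HS Tn
  apply sum_congr rfl
  intro k _
  have hg : ∀ s : ℕ, gfact (-β*s + -γ) α n = (-1:ℝ)^n * gfact (β*s+γ) (-α) n := by
    intro s
    rw [show (-β*(s:ℝ) + -γ) = -(β*s+γ) from by ring, gfact_neg]
  have hsum : ∑ s ∈ range (k+1), (-1:ℝ)^(k-s) * (k.choose s : ℝ) * gfact (-β*s + -γ) α n
      = (-1:ℝ)^n * ∑ s ∈ range (k+1), (-1:ℝ)^(k-s) * (k.choose s : ℝ) * gfact (β*s+γ) (-α) n := by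
    rw [mul_sum]
    apply sum_congr rfl
    intro s _
    rw [hg s]; ring
  rw [hsum]
  set S := ∑ s ∈ range (k+1), (-1:ℝ)^(k-s) * (k.choose s : ℝ) * gfact (β*s+γ) (-α) n with hS
  have hc : ((-β)^k * (k.factorial : ℝ)) ≠ 0 := by
    apply mul_ne_zero (pow_ne_zero _ (neg_ne_zero.mpr hβ))
    exact_mod_cast (Nat.factorial_ne_zero k)
  have e1 : (-1:ℝ)^n * (-1:ℝ)^n = 1 := by
    rw [← pow_add]; exact Even.neg_one_pow ⟨n, rfl⟩
  have key : (-1:ℝ)^(n+k) * β^k * (k.factorial : ℝ) * (1/((-β)^k * (k.factorial:ℝ)) * ((-1:ℝ)^n)) = 1 := by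
    have h2 : (-1:ℝ)^(n+k) * β^k * (k.factorial : ℝ) * (1/((-β)^k * (k.factorial:ℝ)) * ((-1:ℝ)^n))
        = ((-1:ℝ)^n * (-1:ℝ)^n) * (((-β)^k * (k.factorial:ℝ)) * (1/((-β)^k * (k.factorial:ℝ)))) := by
      rw [neg_pow β k, pow_add]; ring
    rw [h2, e1, mul_one_div, div_self hc, mul_one]
  calc ((k+lam-1).choose k : ℝ) * (-1:ℝ)^(n+k) * β^k * (k.factorial:ℝ) * (1/((-β)^k * (k.factorial:ℝ)) * ((-1:ℝ)^n * S)) * x^k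
      = ((k+lam-1).choose k : ℝ)
        * ((-1:ℝ)^(n+k) * β^k * (k.factorial:ℝ) * (1/((-β)^k * (k.factorial:ℝ)) * ((-1:ℝ)^n))) * S * x^k := by
        ring
    _ = x^k * ((k+lam-1).choose k : ℝ) * S := by rw [key]; ring
lemma claim1 (α β Γ₁ γ₂ : ℝ) (n k₁ k₂ : ℕ) :
    ∑ m ∈ range (n+1), (n.choose m : ℝ) * Tn α β m k₁ Γ₁ * Tn α β (n-m) k₂ γ₂
      = Tn α β n (k₁+k₂) (Γ₁+γ₂) := by
  set K := k₁ + k₂ with hK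
  set F : ℕ → ℕ → ℝ := fun s₁ s₂ =>
    (-1:ℝ)^(K-(s₁+s₂)) * (k₁.choose s₁ : ℝ) * (k₂.choose s₂ : ℝ)
      * gfact (β*((s₁+s₂ : ℕ) : ℝ)+(Γ₁+γ₂)) (-α) n with hF
  have step1 : ∑ m ∈ range (n+1), (n.choose m : ℝ) * Tn α β m k₁ Γ₁ * Tn α β (n-m) k₂ γ₂
      = ∑ s₁ ∈ range (k₁+1), ∑ s₂ ∈ range (k₂+1), F s₁ s₂ := by
    have hm : ∀ m ∈ range (n+1), (n.choose m : ℝ) * Tn α β m k₁ Γ₁ * Tn α β (n-m) k₂ γ₂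
        = ∑ s₁ ∈ range (k₁+1), ∑ s₂ ∈ range (k₂+1),
            ((-1:ℝ)^(k₁-s₁) * (k₁.choose s₁ : ℝ) * ((-1:ℝ)^(k₂-s₂) * (k₂.choose s₂ : ℝ)))
            * ((n.choose m : ℝ) * gfact (β*s₁+Γ₁) (-α) m * gfact (β*s₂+γ₂) (-α) (n-m)) := by
      intro m _
      unfold Tn
      rw [mul_assoc, sum_mul_sum, mul_sum]
      apply sum_congr rfl; intro s₁ _
      rw [mul_sum]
      apply sum_congr rfl; intro s₂ _
      ring
    rw [sum_congr rfl hm, sum_comm]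
    apply sum_congr rfl; intro s₁ hs₁
    rw [sum_comm]
    apply sum_congr rfl; intro s₂ hs₂
    rw [← mul_sum, ← gfact_add_eq (-α) (β*s₁+Γ₁) (β*s₂+γ₂) n]
    have hs1 : s₁ ≤ k₁ := Nat.lt_succ_iff.mp (mem_range.mp hs₁)
    have hs2 : s₂ ≤ k₂ := Nat.lt_succ_iff.mp (mem_range.mp hs₂)
    have harg : β*(s₁:ℝ)+Γ₁+(β*(s₂:ℝ)+γ₂) = β*((s₁+s₂ : ℕ):ℝ)+(Γ₁+γ₂) := by
      push_cast; ring
    have hsgn : (-1:ℝ)^(k₁-s₁) * (-1:ℝ)^(k₂-s₂) = (-1:ℝ)^(K-(s₁+s₂)) := by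
      rw [← pow_add]; congr 1; omega
    rw [harg]
    simp only [hF]
    rw [← hsgn]
    ring
  have step2 : ∑ s₁ ∈ range (k₁+1), ∑ s₂ ∈ range (k₂+1), F s₁ s₂
      = ∑ s₁ ∈ range (K+1), ∑ s₂ ∈ range (K-s₁+1), F s₁ s₂ := by
    have inner : ∀ s₁ ∈ range (k₁+1),
        ∑ s₂ ∈ range (k₂+1), F s₁ s₂ = ∑ s₂ ∈ range (K-s₁+1), F s₁ s₂ := by
      intro s₁ hs₁
      apply sum_subset
      · apply range_subset_range.mpr
        have := mem_range.mp hs₁; omega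
      · intro s₂ _ hs₂
        have h2 : k₂ < s₂ := by
          simp only [mem_range, not_lt] at hs₂; omega
        simp only [hF]
        rw [Nat.choose_eq_zero_of_lt h2]
        simp
    rw [sum_congr rfl inner]
    apply sum_subset
    · exact range_subset_range.mpr (by omega)
    · intro s₁ _ hs₁
      have h1 : k₁ < s₁ := by
        simp only [mem_range, not_lt] at hs₁; omega
      apply sum_eq_zero
      intro s₂ _
      simp only [hF]
      rw [Nat.choose_eq_zero_of_lt h1]
      simp
  have step4 : ∀ s ∈ range (K+1), ∑ s₁ ∈ range (s+1), F s₁ (s-s₁)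
      = (-1:ℝ)^(K-s) * (K.choose s : ℝ) * gfact (β*s+(Γ₁+γ₂)) (-α) n := by
    intro s _
    have hterm : ∀ s₁ ∈ range (s+1), F s₁ (s-s₁)
        = (-1:ℝ)^(K-s) * gfact (β*s+(Γ₁+γ₂)) (-α) n
          * ((k₁.choose s₁ : ℝ) * (k₂.choose (s-s₁) : ℝ)) := by
      intro s₁ hs₁
      simp only [hF]
      have h1 : s₁ + (s - s₁) = s := by
        have := mem_range.mp hs₁; omega
      rw [h1]
      ring
    rw [sum_congr rfl hterm, ← mul_sum]
    have hv : ∑ s₁ ∈ range (s+1), (k₁.choose s₁ : ℝ) * (k₂.choose (s-s₁) : ℝ)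
        = ((k₁+k₂).choose s : ℝ) := by
      rw [← vand_range k₁ k₂ s]
      push_cast
      rfl
    rw [hv, ← hK]
    ring
  rw [step1, step2, ← triangle F K, sum_congr rfl step4]
  simp only [Tn]
lemma A_repr_ext (α β x γ : ℝ) (hβ : β ≠ 0) (lam n N : ℕ) (h : n ≤ N) :
    A lam x n α β γ = ∑ k ∈ range (N+1), x^k * ((k+lam-1).choose k : ℝ) * Tn α β n k γ := by
  rw [A_repr α β x γ hβ lam n]
  apply sum_subset (range_subset_range.mpr (by omega))
  intro k _ hk
  have hnk : n < k := by simp only [mem_range, not_lt] at hk; omega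
  rw [Tn_vanish α β γ hnk, mul_zero]

theorem stmt5 (α β γ₁ γ₂ x : ℝ) (hβ : β ≠ 0) (lam₁ lam₂ : ℕ)
    (h₁ : 1 ≤ lam₁) (h₂ : 1 ≤ lam₂) (n : ℕ) :
    ∑ k ∈ Finset.range (n + 1),
        (Nat.choose n k : ℝ) * A lam₁ x k α β (α + β + γ₁) * A lam₂ x (n - k) α β γ₂ =
      A (lam₁ + lam₂) x n α β (α + β + γ₁ + γ₂) := by
  set a := lam₁ - 1 with ha
  set b := lam₂ - 1 with hb
  set Γ := α + β + γ₁ + γ₂ with hΓ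
  set G : ℕ → ℕ → ℝ := fun k₁ k₂ =>
    x^(k₁+k₂) * ((k₁+a).choose a : ℝ) * ((k₂+b).choose b : ℝ) * Tn α β n (k₁+k₂) Γ with hG
  have key1 : ∀ k₁ k₂ : ℕ,
      (x^k₁ * ((k₁+lam₁-1).choose k₁ : ℝ)) * (x^k₂ * ((k₂+lam₂-1).choose k₂ : ℝ))
        * Tn α β n (k₁+k₂) ((α+β+γ₁)+γ₂) = G k₁ k₂ := by
    intro k₁ k₂
    have e1 : (k₁+lam₁-1).choose k₁ = (k₁+a).choose a := by
      have h := Nat.choose_symm (Nat.le_add_right k₁ a)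
      rw [show k₁+lam₁-1 = k₁+a from by omega, ← h, show k₁+a-k₁ = a from by omega]
    have e2 : (k₂+lam₂-1).choose k₂ = (k₂+b).choose b := by
      have h := Nat.choose_symm (Nat.le_add_right k₂ b)
      rw [show k₂+lam₂-1 = k₂+b from by omega, ← h, show k₂+b-k₂ = b from by omega]
    rw [e1, e2]
    simp only [hG]
    rw [pow_add]
    ring
  have hL : ∀ m ∈ range (n+1),
      (n.choose m : ℝ) * A lam₁ x m α β (α + β + γ₁) * A lam₂ x (n-m) α β γ₂
      = ∑ k₁ ∈ range (n+1), ∑ k₂ ∈ range (n+1),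
          (x^k₁ * ((k₁+lam₁-1).choose k₁ : ℝ)) * (x^k₂ * ((k₂+lam₂-1).choose k₂ : ℝ))
          * ((n.choose m : ℝ) * Tn α β m k₁ (α+β+γ₁) * Tn α β (n-m) k₂ γ₂) := by
    intro m hm
    have hm' : m ≤ n := Nat.lt_succ_iff.mp (mem_range.mp hm)
    rw [A_repr_ext α β x (α+β+γ₁) hβ lam₁ m n hm',
        A_repr_ext α β x γ₂ hβ lam₂ (n-m) n (by omega)]
    rw [mul_assoc, sum_mul_sum, mul_sum]
    apply sum_congr rfl; intro k₁ _
    rw [mul_sum]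
    apply sum_congr rfl; intro k₂ _
    ring
  rw [sum_congr rfl hL, sum_comm]
  have hmid : ∀ k₁ ∈ range (n+1),
      (∑ m ∈ range (n+1), ∑ k₂ ∈ range (n+1),
          (x^k₁ * ((k₁+lam₁-1).choose k₁ : ℝ)) * (x^k₂ * ((k₂+lam₂-1).choose k₂ : ℝ))
          * ((n.choose m : ℝ) * Tn α β m k₁ (α+β+γ₁) * Tn α β (n-m) k₂ γ₂))
      = ∑ k₂ ∈ range (n-k₁+1), G k₁ k₂ := by
    intro k₁ hk₁
    have hk₁' : k₁ ≤ n := Nat.lt_succ_iff.mp (mem_range.mp hk₁)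
    rw [sum_comm]
    have h1 : ∀ k₂ ∈ range (n+1),
        (∑ m ∈ range (n+1),
          (x^k₁ * ((k₁+lam₁-1).choose k₁ : ℝ)) * (x^k₂ * ((k₂+lam₂-1).choose k₂ : ℝ))
          * ((n.choose m : ℝ) * Tn α β m k₁ (α+β+γ₁) * Tn α β (n-m) k₂ γ₂))
        = G k₁ k₂ := by
      intro k₂ _
      rw [← mul_sum, claim1 α β (α+β+γ₁) γ₂ n k₁ k₂]
      exact key1 k₁ k₂
    rw [sum_congr rfl h1]
    symm
    apply sum_subset (range_subset_range.mpr (by omega))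
    intro k₂ _ hk₂
    have hlt : n < k₁ + k₂ := by
      simp only [mem_range, not_lt] at hk₂; omega
    simp only [hG]
    rw [Tn_vanish α β Γ hlt, mul_zero]
  rw [sum_congr rfl hmid]
  rw [A_repr α β x Γ hβ (lam₁+lam₂) n]
  rw [← triangle G n]
  apply sum_congr rfl
  intro K _
  have hterm : ∀ i ∈ range (K+1), G i (K-i)
      = x^K * Tn α β n K Γ * (((i+a).choose a : ℝ) * (((K-i)+b).choose b : ℝ)) := by
    intro i hi
    have h1 : i + (K - i) = K := by
      have := mem_range.mp hi; omega
    simp only [hG]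
    rw [h1]
    ring
  rw [sum_congr rfl hterm, ← mul_sum]
  have hv : ∑ i ∈ range (K+1), ((i+a).choose a : ℝ) * (((K-i)+b).choose b : ℝ)
      = ((K+a+b+1).choose (a+b+1) : ℝ) := by
    rw [← nbvand a b K]
    push_cast
    rfl
  rw [hv]
  have e3 : (K+(lam₁+lam₂)-1).choose K = (K+a+b+1).choose (a+b+1) := by
    have h := Nat.choose_symm (show K ≤ K+a+b+1 from by omega)
    rw [show K+(lam₁+lam₂)-1 = K+a+b+1 from by omega, ← h,
      show K+a+b+1-K = a+b+1 from by omega]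
  rw [e3]
  ring
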